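/- Let H = (X, Y) be an undirected graph with no isolated vertices and let λ ≤ |X| be a positive integer. Construct the 2-swap game with |X| + |Y| − λ strategic red agents and λ strategic blue agents whose topology is obtained from H by adding, for each edge e = {v, w} ∈ Y, a new node s_e adjacent to both v and w. Then there exists an assignment of the agents to the nodes under which every agent is exposed (has at least one neighbor of the other type) if and only if H has a vertex cover of size at most λ. -/

import Mathlib

open Finset

namespace SwapGame

/-- Build a simple graph from a (not necessarily symmetric) boolean relation
by symmetrizing it and removing loops. -/
def mkGraph {V : Type*} (r : V → V → Bool) : SimpleGraph V where
  Adj a b := a ≠ b ∧ (r a b ∨ r b a)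
  symm := ⟨fun a b h => ⟨Ne.symm h.1, Or.symm h.2⟩⟩
  loopless := ⟨fun a h => h.1 rfl⟩

instance mkGraph.instDecidableRel {V : Type*} [DecidableEq V] (r : V → V → Bool) :
    DecidableRel (mkGraph r).Adj :=
  fun a b => inferInstanceAs (Decidable (a ≠ b ∧ (r a b ∨ r b a)))

variable {A V K : Type*} [Fintype V] [DecidableEq A] [DecidableEq V] [DecidableEq K]

/-- The assignment obtained from `σ` by swapping the locations of agents `i` and `j`. -/
def swapA (σ : A ≃ V) (i j : A) : A ≃ V := (Equiv.swap i j).trans σ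

/-- The utility of agent `i` under assignment `σ`: the fraction of the neighbors of the
node of `i` that are occupied by agents of the same type (friends of `i`). -/
def util (G : SimpleGraph V) [DecidableRel G.Adj] (c : A → K) (σ : A ≃ V) (i : A) : ℚ :=
  (((G.neighborFinset (σ i)).filter (fun w => c (σ.symm w) = c i)).card : ℚ) /
    ((G.neighborFinset (σ i)).card : ℚ)

/-- Agents `i` and `j` both strictly increase their utility by swapping their locations. -/
def improving (G : SimpleGraph V) [DecidableRel G.Adj] (c : A → K) (σ : A ≃ V)
    (i j : A) : Prop :=
  util G c σ i < util G c (swapA σ i j) i ∧ util G c σ j < util G c (swapA σ i j) j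

/-- An assignment is an equilibrium if no pair of agents can both strictly increase
their utility by swapping positions. -/
def isEquilibrium (G : SimpleGraph V) [DecidableRel G.Adj] (c : A → K) (σ : A ≃ V) : Prop :=
  ¬ ∃ i j : A, improving G c σ i j

/-- The social welfare of an assignment: the sum of the utilities of all agents. -/
def SW [Fintype A] (G : SimpleGraph V) [DecidableRel G.Adj] (c : A → K) (σ : A ≃ V) : ℚ :=
  ∑ i : A, util G c σ i

/-- Agent `i` is exposed: at least one neighbor is occupied by an agent of another type. -/
def exposed (G : SimpleGraph V) [DecidableRel G.Adj] (c : A → K) (σ : A ≃ V) (i : A) : Prop :=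
  ((G.neighborFinset (σ i)).filter (fun w => c (σ.symm w) ≠ c i)).Nonempty

instance exposed.instDecidable (G : SimpleGraph V) [DecidableRel G.Adj] (c : A → K)
    (σ : A ≃ V) : DecidablePred (exposed G c σ) :=
  fun _ => inferInstanceAs (Decidable (Finset.Nonempty _))

/-- The degree of integration of an assignment: the number of exposed agents. -/
def DI [Fintype A] (G : SimpleGraph V) [DecidableRel G.Adj] (c : A → K) (σ : A ≃ V) : ℕ :=
  (univ.filter (fun i : A => exposed G c σ i)).card

end SwapGame

namespace SwapGame

/-- The topology of the vertex-cover construction: the nodes of `H` together with one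
node `s_e` per edge `e` of `H`, where `s_e` is adjacent to both endpoints of `e`. -/
abbrev VVC {X : Type} [Fintype X] [DecidableEq X] (H : SimpleGraph X)
    [DecidableRel H.Adj] : Type :=
  X ⊕ {e : Sym2 X // e ∈ H.edgeFinset}

def adjVC {X : Type} [Fintype X] [DecidableEq X] (H : SimpleGraph X)
    [DecidableRel H.Adj] : VVC H → VVC H → Bool
  | .inl x, .inl y => decide (H.Adj x y)
  | .inl x, .inr e => decide (x ∈ e.1)
  | _, _ => false

/-- Agents: `|X| + |Y| − λ` strategic red agents and `λ` strategic blue agents. -/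
abbrev AVC {X : Type} [Fintype X] [DecidableEq X] (H : SimpleGraph X)
    [DecidableRel H.Adj] (lam : ℕ) : Type :=
  Fin (Fintype.card X + H.edgeFinset.card - lam) ⊕ Fin lam

/-- The type (color) of each agent: `0` = red, `1` = blue. -/
def cVC {X : Type} [Fintype X] [DecidableEq X] (H : SimpleGraph X)
    [DecidableRel H.Adj] (lam : ℕ) : AVC H lam → Fin 2 :=
  Sum.elim (fun _ => 0) (fun _ => 1)

section Aux

variable {X : Type} [Fintype X] [DecidableEq X] (H : SimpleGraph X) [DecidableRel H.Adj]

lemma adjVC_inl_inl (x y : X) :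
    (mkGraph (adjVC H)).Adj (Sum.inl x) (Sum.inl y) ↔ H.Adj x y := by
  constructor
  · rintro ⟨hne, h | h⟩
    · simpa [adjVC] using h
    · exact (by simpa [adjVC] using h : H.Adj y x).symm
  · intro h
    exact ⟨by simp [h.ne], Or.inl (by simp [adjVC, h])⟩

lemma adjVC_inl_inr (x : X) (e : {e : Sym2 X // e ∈ H.edgeFinset}) :
    (mkGraph (adjVC H)).Adj (Sum.inl x) (Sum.inr e) ↔ x ∈ e.1 := by
  constructor
  · rintro ⟨hne, h | h⟩
    · simpa [adjVC] using h
    · simp [adjVC] at h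
  · intro h
    exact ⟨by simp, Or.inl (by simp [adjVC, h])⟩

lemma adjVC_inr (e : {e : Sym2 X // e ∈ H.edgeFinset}) (u : VVC H)
    (h : (mkGraph (adjVC H)).Adj (Sum.inr e) u) : ∃ x : X, u = Sum.inl x ∧ x ∈ e.1 := by
  cases u with
  | inl x => exact ⟨x, rfl, ((adjVC_inl_inr H x e).mp h.symm)⟩
  | inr f =>
    rcases h with ⟨_, h | h⟩ <;> simp [adjVC] at h

lemma exposed_iff {A K : Type*} [DecidableEq A] [DecidableEq K]
    (G : SimpleGraph (VVC H)) [DecidableRel G.Adj] (c : A → K) (σ : A ≃ VVC H) (i : A) :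
    exposed G c σ i ↔ ∃ v, G.Adj (σ i) v ∧ c (σ.symm v) ≠ c i := by
  simp [exposed, Finset.filter_nonempty_iff, SimpleGraph.mem_neighborFinset]

end Aux

/-- for a graph `H = (X, Y)` with no isolated vertices and a positive
integer `λ ≤ |X|`, the constructed 2-swap game with `|X| + |Y| − λ` strategic red agents
and `λ` strategic blue agents admits an assignment under which every agent is exposed
(has a neighbor of the other type) if and only if `H` has a vertex cover of size at most
`λ`. -/
theorem all_exposed_iff_vertex_cover {X : Type} [Fintype X] [DecidableEq X]
    (H : SimpleGraph X) [DecidableRel H.Adj] (hiso : ∀ v : X, 0 < H.degree v)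
    (lam : ℕ) (hpos : 0 < lam) (hlam : lam ≤ Fintype.card X) :
    (∃ σ : AVC H lam ≃ VVC H,
        ∀ i : AVC H lam, exposed (mkGraph (adjVC H)) (cVC H lam) σ i) ↔
    (∃ C : Finset X, C.card ≤ lam ∧ ∀ v w : X, H.Adj v w → v ∈ C ∨ w ∈ C) := by
  constructor
  · -- all exposed → vertex cover
    rintro ⟨σ, hexp⟩
    set c := cVC H lam with hc
    set B : Finset (VVC H) := univ.filter (fun v => c (σ.symm v) = 1) with hBdef
    have hB : B.card = lam := by
      have h1 : B = (univ.filter fun i : AVC H lam => c i = 1).image σ := by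
        ext v
        simp only [hBdef, mem_image, mem_filter, mem_univ, true_and]
        constructor
        · intro hv; exact ⟨σ.symm v, hv, σ.apply_symm_apply v⟩
        · rintro ⟨i, hi, rfl⟩; simpa using hi
      have h2 : (univ.filter fun i : AVC H lam => c i = 1) =
          (univ : Finset (Fin lam)).image Sum.inr := by
        ext i
        cases i <;> simp [hc, cVC]
      rw [h1, h2, Finset.card_image_of_injective _ σ.injective,
        Finset.card_image_of_injective _ Sum.inr_injective, card_univ, Fintype.card_fin]
    set f : VVC H → X := Sum.elim id (fun e => e.1.out.1) with hf
    refine ⟨B.image f, le_trans Finset.card_image_le (le_of_eq hB), ?_⟩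
    intro v w hvw
    have he : s(v, w) ∈ H.edgeFinset := by
      rw [SimpleGraph.mem_edgeFinset]; exact hvw
    by_cases hblue : c (σ.symm (Sum.inr ⟨s(v, w), he⟩)) = 1
    · -- the edge node is blue; its out representative endpoint is blue? no, itself in image
      have hmem : Sum.inr ⟨s(v, w), he⟩ ∈ B := by
        simp [hBdef, hblue]
      have : f (Sum.inr ⟨s(v, w), he⟩) ∈ B.image f := Finset.mem_image_of_mem f hmem
      have hout : (s(v, w) : Sym2 X).out.1 ∈ (s(v, w) : Sym2 X) := Sym2.out_fst_mem _
      rw [Sym2.mem_iff] at hout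
      rcases hout with h | h
      · left; simpa [hf, h] using this
      · right; simpa [hf, h] using this
    · -- the edge node is red; one endpoint must be blue
      have := (exposed_iff H _ c σ _).mp (hexp (σ.symm (Sum.inr ⟨s(v, w), he⟩)))
      rw [σ.apply_symm_apply] at this
      obtain ⟨u, hadj, hne⟩ := this
      obtain ⟨x, rfl, hx⟩ := adjVC_inr H _ u hadj
      have hcx : c (σ.symm (Sum.inl x)) = 1 := by
        have h0 : ∀ a : Fin 2, a ≠ 1 → a = 0 := by decide
        have := h0 _ hblue
        rw [this] at hne
        have h1 : ∀ a : Fin 2, a ≠ 0 → a = 1 := by decide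
        exact h1 _ hne
      have hmem : Sum.inl x ∈ B := by simp [hBdef, hcx]
      have hxC : x ∈ B.image f := by
        have := Finset.mem_image_of_mem f hmem
        simpa [hf] using this
      rw [Sym2.mem_iff] at hx
      rcases hx with rfl | rfl
      · exact Or.inl hxC
      · exact Or.inr hxC
  · -- vertex cover → all exposed
    rintro ⟨C, hCcard, hcov⟩
    obtain ⟨C', hCC', -, hC'card⟩ := Finset.exists_subsuperset_card_eq
      (Finset.subset_univ C) hCcard (by simpa using hlam)
    have hcov' : ∀ v w : X, H.Adj v w → v ∈ C' ∨ w ∈ C' := fun v w h =>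
      (hcov v w h).imp (fun hv => hCC' hv) (fun hw => hCC' hw)
    set B : Finset (VVC H) := C'.image Sum.inl with hBdef
    have hB : B.card = lam := by
      rw [hBdef, Finset.card_image_of_injective _ Sum.inl_injective, hC'card]
    classical
    have hcard1 : Fintype.card {v : VVC H // v ∈ B} = lam := by
      exact (Fintype.card_coe B).trans hB
    have hcardV : Fintype.card (VVC H) = Fintype.card X + H.edgeFinset.card := by
      rw [Fintype.card_sum, Fintype.card_coe]
    have hcard2 : Fintype.card {v : VVC H // v ∉ B} =
        Fintype.card X + H.edgeFinset.card - lam := by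
      rw [Fintype.card_subtype_compl, hcard1, hcardV]
    let eB : Fin lam ≃ {v : VVC H // v ∈ B} :=
      Fintype.equivOfCardEq (by rw [Fintype.card_fin, hcard1])
    let eR : Fin (Fintype.card X + H.edgeFinset.card - lam) ≃ {v : VVC H // v ∉ B} :=
      Fintype.equivOfCardEq (by rw [Fintype.card_fin, hcard2])
    let σ : AVC H lam ≃ VVC H :=
      (Equiv.sumComm _ _).trans ((Equiv.sumCongr eB eR).trans
        (Equiv.sumCompl (fun v : VVC H => v ∈ B)))
    have hσ : ∀ i : AVC H lam, cVC H lam i = 1 ↔ σ i ∈ B := by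
      rintro (r | b)
      · refine iff_of_false (by simp [cVC]) ?_
        show σ (Sum.inl r) ∉ B
        simpa [σ, Equiv.sumCompl] using (eR r).2
      · refine iff_of_true rfl ?_
        show σ (Sum.inr b) ∈ B
        simpa [σ, Equiv.sumCompl] using (eB b).2
    have hcB : ∀ v : VVC H, cVC H lam (σ.symm v) = 1 ↔ v ∈ B := by
      intro v
      have := hσ (σ.symm v)
      rwa [σ.apply_symm_apply] at this
    -- key combinatorial fact
    have key : ∀ n : VVC H, ∃ u : VVC H,
        (mkGraph (adjVC H)).Adj n u ∧ ((u ∈ B) ↔ (n ∉ B)) := by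
      intro n
      cases n with
      | inl x =>
        obtain ⟨w, hw⟩ := (SimpleGraph.degree_pos_iff_exists_adj H x).mp (hiso x)
        have he : s(x, w) ∈ H.edgeFinset := by
          rw [SimpleGraph.mem_edgeFinset]; exact hw
        by_cases hx : x ∈ C'
        · refine ⟨Sum.inr ⟨s(x, w), he⟩, (adjVC_inl_inr H x _).mpr (by simp), ?_⟩
          simp [hBdef, hx]
        · have hwC : w ∈ C' := by
            rcases hcov' x w hw with h | h
            · exact absurd h hx
            · exact h
          refine ⟨Sum.inl w, (adjVC_inl_inl H x w).mpr hw, ?_⟩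
          simp [hBdef, hx, hwC]
      | inr e =>
        obtain ⟨e, he⟩ := e
        revert he
        induction e using Sym2.ind with
        | _ v w =>
          intro he
          have hvw : H.Adj v w := by rwa [SimpleGraph.mem_edgeFinset, SimpleGraph.mem_edgeSet] at he
          have hnB : (Sum.inr ⟨s(v, w), he⟩ : VVC H) ∉ B := by simp [hBdef]
          rcases hcov' v w hvw with h | h
          · refine ⟨Sum.inl v, ((adjVC_inl_inr H v ⟨s(v, w), he⟩).mpr (by simp)).symm, ?_⟩
            simp [hBdef, h]
          · refine ⟨Sum.inl w, ((adjVC_inl_inr H w ⟨s(v, w), he⟩).mpr (by simp)).symm, ?_⟩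
            simp [hBdef, h]
    refine ⟨σ, fun i => ?_⟩
    obtain ⟨u, hadj, hiff⟩ := key (σ i)
    rw [exposed_iff]
    refine ⟨u, hadj, ?_⟩
    have hci : cVC H lam i = 1 ↔ σ i ∈ B := hσ i
    have hcu : cVC H lam (σ.symm u) = 1 ↔ u ∈ B := hcB u
    have hfin : ∀ a b : Fin 2, (a = 1 ↔ ¬(b = 1)) → a ≠ b := by decide
    refine hfin _ _ ?_
    rw [hcu, hci]
    exact hiff.trans (not_iff_not.mpr Iff.rfl)

end SwapGame
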